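/- Let F be a standard Borel space. For a measurable set G ⊆ F and n ∈ ℕ, define the counting event C(G, n) := {S ∈ Finset F : |S ∩ G| = n}. Then the σ-algebra on Finset F comapped along ι from the canonical σ-algebra on Measure F is equal to the σ-algebra generated by the family of all counting events C(G, n) with G ⊆ F measurable and n ∈ ℕ. -/
import Mathlib


open MeasureTheory

/-- The canonical embedding of a database instance (a finite set of facts)
into the space of measures: `S ↦ ∑_{x ∈ S} δ_x`. -/
noncomputable def iota {F : Type*} [MeasurableSpace F] (S : Finset F) : Measure F :=
  ∑ x ∈ S, Measure.dirac x

lemma iota_apply {F : Type*} [MeasurableSpace F] (S : Finset F) {G : Set F}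
    (hG : MeasurableSet G) :
    iota S G = (((S : Set F) ∩ G).ncard : ENNReal) := by
  classical
  have h1 : iota S G = ((S.filter (· ∈ G)).card : ENNReal) := by
    simp only [iota, Measure.finset_sum_apply, Measure.dirac_apply' _ hG,
      Set.indicator_apply, Pi.one_apply]
    rw [Finset.sum_boole]
  have h2 : ((S : Set F) ∩ G).ncard = (S.filter (· ∈ G)).card := by
    rw [← Set.ncard_coe_finset]
    congr 1
    ext x
    simp
  rw [h1, h2]

/-- The σ-algebra on `Finset F` comapped along `ι` from the canonical σ-algebra on
`Measure F` coincides with the σ-algebra generated by the counting events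
`C(G, n) = {S : |S ∩ G| = n}` for `G ⊆ F` measurable and `n ∈ ℕ`. -/
theorem comap_iota_eq_generateFrom_countingEvents (F : Type*) [MeasurableSpace F]
    [StandardBorelSpace F] :
    MeasurableSpace.comap iota (inferInstance : MeasurableSpace (Measure F)) =
    MeasurableSpace.generateFrom
      {C : Set (Finset F) | ∃ (G : Set F) (n : ℕ), MeasurableSet G ∧
        C = {S : Finset F | ((S : Set F) ∩ G).ncard = n}} := by
  apply le_antisymm
  · -- comap ≤ generateFrom
    rw [show (inferInstance : MeasurableSpace (Measure F)) =
        ⨆ (s : Set F) (_ : MeasurableSet s), (borel ENNReal).comap (fun μ => μ s) from rfl]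
    simp only [MeasurableSpace.comap_iSup]
    apply iSup_le; intro G; apply iSup_le; intro hG
    rw [MeasurableSpace.comap_comp]
    -- the map S ↦ iota S G is measurable w.r.t. the generated σ-algebra
    have hcount : @Measurable (Finset F) ℕ
        (MeasurableSpace.generateFrom
          {C : Set (Finset F) | ∃ (G : Set F) (n : ℕ), MeasurableSet G ∧
            C = {S : Finset F | ((S : Set F) ∩ G).ncard = n}}) ⊤
        (fun S => ((S : Set F) ∩ G).ncard) := by
      refine @measurable_to_countable' ℕ (Finset F) ⊤ _
        (MeasurableSpace.generateFrom
          {C : Set (Finset F) | ∃ (G : Set F) (n : ℕ), MeasurableSet G ∧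
            C = {S : Finset F | ((S : Set F) ∩ G).ncard = n}}) _ fun n => ?_
      apply MeasurableSpace.measurableSet_generateFrom
      exact ⟨G, n, hG, rfl⟩
    have : @Measurable (Finset F) ENNReal
        (MeasurableSpace.generateFrom
          {C : Set (Finset F) | ∃ (G : Set F) (n : ℕ), MeasurableSet G ∧
            C = {S : Finset F | ((S : Set F) ∩ G).ncard = n}}) (borel ENNReal)
        (fun S => iota S G) := by
      have : (fun S : Finset F => iota S G) =
          (fun n : ℕ => (n : ENNReal)) ∘ (fun S : Finset F => ((S : Set F) ∩ G).ncard) := by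
        funext S; exact iota_apply S hG
      rw [this]
      exact (@measurable_from_top ℕ ENNReal (borel ENNReal) _).comp hcount
    exact MeasurableSpace.comap_le_iff_le_map.mpr fun s hs => this hs
  · -- generateFrom ≤ comap
    apply MeasurableSpace.generateFrom_le
    rintro C ⟨G, n, hG, rfl⟩
    refine ⟨(fun μ : Measure F => μ G) ⁻¹' {(n : ENNReal)}, ?_, ?_⟩
    · exact Measure.measurable_coe hG (measurableSet_singleton _)
    · ext S
      simp only [Set.mem_preimage, Set.mem_singleton_iff, Set.mem_setOf_eq,
        iota_apply S hG, Nat.cast_inj]
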